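/- arXiv:2506.05541 — 3 statements merged into one kernel-verified Lean document; each statement's English description precedes it below -/
import Mathlib

section
/- Let α ∈ (0, π/3) and define the piecewise linear functions x_k : [0,1] → ℝ by x_k(t) = 2^k f_{k,j}(t − (j−1)/2^k) + f_{k,1} + ⋯ + f_{k,j−1} for t ∈ [(j−1)/2^k, j/2^k], where f_{k,i} = cos(b_{k,i})/(2cos α)^k and the angles b_{k,i} are generated by the paperfolding substitution b_{k+1,2i−1}, b_{k+1,2i} ∈ {b_{k,i}+α, b_{k,i}−α} (alternating order), starting from b_{0,1} = 0. Then for every t ∈ [0,1] and every n ≥ 1, |x_{n+1}(t) − x_n(t)| ≤ 4/(2 cos α)^n. -/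
open Real Filter

noncomputable def dragonAngle (α : ℝ) : ℕ → ℕ → ℝ
  | 0, _ => 0
  | k+1, i => dragonAngle α k (i / 2) + (if (i / 2) % 2 = i % 2 then α else -α)

noncomputable def fcoef (α : ℝ) (k i : ℕ) : ℝ :=
  Real.cos (dragonAngle α k i) / (2 * Real.cos α) ^ k

noncomputable def gcoef (α : ℝ) (k i : ℕ) : ℝ :=
  Real.sin (dragonAngle α k i) / (2 * Real.cos α) ^ k

noncomputable def xfun (α : ℝ) (k : ℕ) (t : ℝ) : ℝ :=
  (∑ i ∈ Finset.range (min ⌊t * 2 ^ k⌋₊ (2 ^ k - 1)), fcoef α k i) +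
    2 ^ k * fcoef α k (min ⌊t * 2 ^ k⌋₊ (2 ^ k - 1)) *
      (t - (min ⌊t * 2 ^ k⌋₊ (2 ^ k - 1) : ℕ) / 2 ^ k)

noncomputable def yfun (α : ℝ) (k : ℕ) (t : ℝ) : ℝ :=
  (∑ i ∈ Finset.range (min ⌊t * 2 ^ k⌋₊ (2 ^ k - 1)), gcoef α k i) +
    2 ^ k * gcoef α k (min ⌊t * 2 ^ k⌋₊ (2 ^ k - 1)) *
      (t - (min ⌊t * 2 ^ k⌋₊ (2 ^ k - 1) : ℕ) / 2 ^ k)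

lemma fcoef_pair (α : ℝ) (hc : Real.cos α ≠ 0) (k i : ℕ) :
    fcoef α (k+1) (2*i) + fcoef α (k+1) (2*i+1) = fcoef α k i := by
  have h2 : (2 * Real.cos α) ≠ 0 := mul_ne_zero two_ne_zero hc
  have e1 : (2*i)/2 = i := by omega
  have e2 : (2*i)%2 = 0 := by omega
  have e3 : (2*i+1)/2 = i := by omega
  have e4 : (2*i+1)%2 = 1 := by omega
  unfold fcoef
  simp only [dragonAngle, e1, e2, e3, e4]
  set d := dragonAngle α k i with hd
  have key : ∀ x y : ℝ, Real.cos (d + x) + Real.cos (d + y) = Real.cos d * (Real.cos x + Real.cos y) - Real.sin d * (Real.sin x + Real.sin y) := by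
    intro x y; rw [Real.cos_add, Real.cos_add]; ring
  rcases Nat.mod_two_eq_zero_or_one i with h | h <;>
    simp only [h] <;> norm_num <;>
    rw [← add_div, pow_succ, key] <;>
    simp [Real.cos_neg, Real.sin_neg] <;>
    field_simp <;> ring

lemma fcoef_sum (α : ℝ) (hc : Real.cos α ≠ 0) (k j : ℕ) :
    ∑ i ∈ Finset.range (2*j), fcoef α (k+1) i = ∑ i ∈ Finset.range j, fcoef α k i := by
  induction j with
  | zero => simp
  | succ j ih =>
    have h : 2*(j+1) = (2*j+1)+1 := by ring
    rw [h, Finset.sum_range_succ, Finset.sum_range_succ, Finset.sum_range_succ, ih,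
        add_assoc, fcoef_pair α hc]

lemma abs_fcoef_le (α : ℝ) (hc : 0 < Real.cos α) (k i : ℕ) :
    |fcoef α k i| ≤ 1 / (2*Real.cos α)^k := by
  unfold fcoef
  rw [abs_div, abs_of_pos (by positivity : (0:ℝ) < (2*Real.cos α)^k)]
  gcongr
  exact Real.abs_cos_le_one _

lemma floor_double (x : ℝ) (hx : 0 ≤ x) : 2 * ⌊x⌋₊ ≤ ⌊2*x⌋₊ ∧ ⌊2*x⌋₊ ≤ 2*⌊x⌋₊ + 1 := by
  constructor
  · apply Nat.le_floor
    push_cast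
    nlinarith [Nat.floor_le hx]
  · by_contra h
    push_neg at h
    have h1 : ((2*⌊x⌋₊+2 : ℕ) : ℝ) ≤ ⌊2*x⌋₊ := by exact_mod_cast h
    have h2 : (⌊2*x⌋₊ : ℝ) ≤ 2*x := Nat.floor_le (by linarith)
    have h3 := Nat.lt_floor_add_one x
    push_cast at h1
    nlinarith

lemma mul_bound {P c u k : ℝ} (hP : 0 < P) (hc : 0 < c) (hk : |k| ≤ 1/c)
    (h0u : 0 ≤ u) (huu : u ≤ 1/P) : |P * k * u| ≤ 1/c := by
  rw [abs_mul, abs_mul, abs_of_pos hP, abs_of_nonneg h0u]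
  calc P * |k| * u ≤ P * (1/c) * (1/P) := by
        apply mul_le_mul (by gcongr) huu h0u (by positivity)
    _ = 1/c := by field_simp

theorem stmt3 (α : ℝ) (hα0 : 0 < α) (hα1 : α < π / 3) :
    ∀ t ∈ Set.Icc (0 : ℝ) 1, ∀ n : ℕ, 1 ≤ n →
      |xfun α (n + 1) t - xfun α n t| ≤ 4 / (2 * Real.cos α) ^ n := by
  intro t ht n hn
  obtain ⟨ht0, ht1⟩ := ht
  have hcoslt : Real.cos (π/3) < Real.cos α :=
    Real.cos_lt_cos_of_nonneg_of_le_pi hα0.le (by linarith [Real.pi_pos]) hα1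
  rw [Real.cos_pi_div_three] at hcoslt
  set c := 2 * Real.cos α with hcdef
  have hc1 : 1 < c := by rw [hcdef]; linarith
  have hc0 : 0 < c := by linarith
  have hcne : Real.cos α ≠ 0 := by positivity
  have hcn : (0:ℝ) < c ^ n := pow_pos hc0 n
  have hcmono : (1:ℝ)/c^(n+1) ≤ 1/c^n := by
    apply one_div_le_one_div_of_le hcn
    exact pow_le_pow_right₀ hc1.le (Nat.le_succ n)
  -- floor facts
  have hx0 : (0:ℝ) ≤ t * 2^n := by positivity
  have hab : 2 * ⌊t*2^n⌋₊ ≤ ⌊t*2^(n+1)⌋₊ ∧ ⌊t*2^(n+1)⌋₊ ≤ 2*⌊t*2^n⌋₊ + 1 := by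
    rw [show t*2^(n+1) = 2*(t*2^n) by ring]
    exact floor_double _ hx0
  have h2n : (2:ℕ)^(n+1) = 2*2^n := by ring
  have hp : 1 ≤ (2:ℕ)^n := Nat.one_le_two_pow
  simp only [xfun]
  set j := min ⌊t * 2^n⌋₊ (2^n - 1) with hjdef
  set m := min ⌊t * 2^(n+1)⌋₊ (2^(n+1) - 1) with hmdef
  have hm : m = 2*j ∨ m = 2*j + 1 := by omega
  -- bounds on t - m/2^(n+1)
  have hP : (0:ℝ) < 2^(n+1) := by positivity
  have hmle : (m:ℝ) ≤ t * 2^(n+1) := by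
    have h1 : (m:ℝ) ≤ (⌊t*2^(n+1)⌋₊:ℝ) := Nat.cast_le.mpr (min_le_left _ _)
    have h2 : (⌊t*2^(n+1)⌋₊:ℝ) ≤ t*2^(n+1) := Nat.floor_le (by positivity)
    linarith
  have hmge : t * 2^(n+1) ≤ (m:ℝ) + 1 := by
    rcases le_or_gt ⌊t*2^(n+1)⌋₊ (2^(n+1)-1) with h | h
    · have hmb : m = ⌊t*2^(n+1)⌋₊ := by omega
      rw [hmb]
      exact (Nat.lt_floor_add_one _).le
    · have hmb : m = 2^(n+1) - 1 := by omega
      have hcast : (m:ℝ) = 2^(n+1) - 1 := by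
        rw [hmb, Nat.cast_sub Nat.one_le_two_pow]
        push_cast; ring
      rw [hcast]
      nlinarith
  set u := t - (m:ℝ)/2^(n+1) with hudef
  have h0u : 0 ≤ u := by
    rw [hudef, sub_nonneg]
    exact (div_le_iff₀ hP).mpr (by linarith)
  have huu : u ≤ 1/2^(n+1) := by
    have ht' : t ≤ ((m:ℝ)+1)/2^(n+1) := (le_div_iff₀ hP).mpr (by linarith)
    have he : ((m:ℝ)+1)/2^(n+1) - (m:ℝ)/2^(n+1) = 1/2^(n+1) := by ring
    rw [hudef]; linarith
  -- fcoef bounds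
  have hk0 : |fcoef α n j| ≤ 1/c^n := abs_fcoef_le α (by linarith) n j
  have hk1 : |fcoef α (n+1) (2*j)| ≤ 1/c^n :=
    le_trans (abs_fcoef_le α (by linarith) (n+1) (2*j)) hcmono
  have hk2 : |fcoef α (n+1) (2*j+1)| ≤ 1/c^n :=
    le_trans (abs_fcoef_le α (by linarith) (n+1) (2*j+1)) hcmono
  have h2P : (0:ℝ) < 2^n := by positivity
  rcases hm with hm | hm
  · -- m = 2j
    have hfrac : ((m:ℕ):ℝ)/2^(n+1) = (j:ℝ)/2^n := by
      rw [hm]; push_cast; rw [pow_succ]; field_simp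
    have hsum : ∑ i ∈ Finset.range m, fcoef α (n+1) i = ∑ i ∈ Finset.range j, fcoef α n i := by
      rw [hm]; exact fcoef_sum α hcne n j
    have hrew : ((∑ i ∈ Finset.range m, fcoef α (n+1) i) +
          2^(n+1) * fcoef α (n+1) m * (t - (m:ℝ)/2^(n+1))) -
        ((∑ i ∈ Finset.range j, fcoef α n i) +
          2^n * fcoef α n j * (t - (j:ℝ)/2^n)) =
        2^(n+1) * fcoef α (n+1) m * u - 2^n * fcoef α n j * u := by
      rw [hsum, ← hfrac, hudef]; ring
    rw [hrew]
    have hb1 : |2^(n+1) * fcoef α (n+1) m * u| ≤ 1/c^n := by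
      apply mul_bound hP hcn _ h0u huu
      rw [hm]; exact hk1
    have hb2 : |2^n * fcoef α n j * u| ≤ 1/c^n := by
      apply mul_bound h2P hcn hk0 h0u
      calc u ≤ 1/2^(n+1) := huu
        _ ≤ 1/2^n := by
            apply one_div_le_one_div_of_le h2P
            exact pow_le_pow_right₀ one_le_two (Nat.le_succ n)
    calc |2^(n+1) * fcoef α (n+1) m * u - 2^n * fcoef α n j * u|
        ≤ |2^(n+1) * fcoef α (n+1) m * u| + |2^n * fcoef α n j * u| := abs_sub _ _
      _ ≤ 1/c^n + 1/c^n := add_le_add hb1 hb2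
      _ ≤ 4/c^n := by
          have hX : (0:ℝ) ≤ 1/c^n := le_of_lt (one_div_pos.mpr hcn)
          have h4 : (4:ℝ)/c^n = (1/c^n)*4 := by ring
          linarith
  · -- m = 2j+1
    have hfrac : ((m:ℕ):ℝ)/2^(n+1) = (j:ℝ)/2^n + 1/2^(n+1) := by
      rw [hm]; push_cast; rw [pow_succ]; field_simp
    have hsum : ∑ i ∈ Finset.range m, fcoef α (n+1) i
        = (∑ i ∈ Finset.range j, fcoef α n i) + fcoef α (n+1) (2*j) := by
      rw [hm, Finset.sum_range_succ, fcoef_sum α hcne n j]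
    have htj : t - (j:ℝ)/2^n = u + 1/2^(n+1) := by
      rw [hudef, hfrac]; ring
    have hrew : ((∑ i ∈ Finset.range m, fcoef α (n+1) i) +
          2^(n+1) * fcoef α (n+1) m * (t - (m:ℝ)/2^(n+1))) -
        ((∑ i ∈ Finset.range j, fcoef α n i) +
          2^n * fcoef α n j * (t - (j:ℝ)/2^n)) =
        fcoef α (n+1) (2*j) +
          (2^(n+1) * fcoef α (n+1) m * u - 2^n * fcoef α n j * (u + 1/2^(n+1))) := by
      rw [hsum, htj, hudef]; ring
    rw [hrew]
    have hb1 : |2^(n+1) * fcoef α (n+1) m * u| ≤ 1/c^n := by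
      apply mul_bound hP hcn _ h0u huu
      rw [hm]; exact hk2
    have hb2 : |2^n * fcoef α n j * (u + 1/2^(n+1))| ≤ 1/c^n := by
      apply mul_bound h2P hcn hk0 (add_nonneg h0u (by positivity))
      have he : (1:ℝ)/2^(n+1) + 1/2^(n+1) = 1/2^n := by
        rw [pow_succ]; field_simp; ring
      linarith
    calc |fcoef α (n+1) (2*j) +
          (2^(n+1) * fcoef α (n+1) m * u - 2^n * fcoef α n j * (u + 1/2^(n+1)))|
        ≤ |fcoef α (n+1) (2*j)| +
          |2^(n+1) * fcoef α (n+1) m * u - 2^n * fcoef α n j * (u + 1/2^(n+1))| := abs_add_le _ _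
      _ ≤ 1/c^n + (1/c^n + 1/c^n) :=
          add_le_add hk1 (le_trans (abs_sub _ _) (add_le_add hb1 hb2))
      _ ≤ 4/c^n := by
          have hX : (0:ℝ) ≤ 1/c^n := le_of_lt (one_div_pos.mpr hcn)
          have h4 : (4:ℝ)/c^n = (1/c^n)*4 := by ring
          linarith
end

section
/- For all k ≥ 0, x_k(0) = 0, y_k(0) = 0, y_k(1) = 0 and x_k(1) = 1; equivalently ∑_{i=1}^{2^k} cos(b_{k,i})/(2cos α)^k = 1 and ∑_{i=1}^{2^k} sin(b_{k,i})/(2cos α)^k = 0. -/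
open Real Filter

lemma sum_pair (f : ℕ → ℝ) (n : ℕ) :
    ∑ i ∈ Finset.range (2 * n), f i = ∑ j ∈ Finset.range n, (f (2 * j) + f (2 * j + 1)) := by
  induction n with
  | zero => simp
  | succ n ih =>
    rw [show 2 * (n + 1) = (2 * n + 1) + 1 by ring, Finset.sum_range_succ,
      Finset.sum_range_succ, Finset.sum_range_succ, ih]
    ring

lemma sum_trig (α : ℝ) (k : ℕ) :
    (∑ i ∈ Finset.range (2 ^ k), Real.cos (dragonAngle α k i)) = (2 * Real.cos α) ^ k ∧
    (∑ i ∈ Finset.range (2 ^ k), Real.sin (dragonAngle α k i)) = 0 := by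
  induction k with
  | zero => simp [dragonAngle]
  | succ k ih =>
    have hval : ∀ j : ℕ,
        dragonAngle α (k+1) (2*j) = dragonAngle α k j + (if j % 2 = 0 then α else -α) ∧
        dragonAngle α (k+1) (2*j+1) = dragonAngle α k j + (if j % 2 = 1 then α else -α) := by
      intro j
      have h1 : (2*j)/2 = j := by omega
      have h2 : (2*j) % 2 = 0 := by omega
      have h3 : (2*j+1)/2 = j := by omega
      have h4 : (2*j+1) % 2 = 1 := by omega
      constructor <;> simp [dragonAngle, h1, h2, h3, h4]
    have keyc : ∀ j : ℕ, Real.cos (dragonAngle α (k+1) (2*j)) +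
        Real.cos (dragonAngle α (k+1) (2*j+1)) = 2 * Real.cos α * Real.cos (dragonAngle α k j) := by
      intro j
      rw [(hval j).1, (hval j).2]
      rcases Nat.mod_two_eq_zero_or_one j with h | h <;> rw [h] <;>
        norm_num [Real.cos_add, Real.cos_neg, Real.sin_neg] <;> ring
    have keys : ∀ j : ℕ, Real.sin (dragonAngle α (k+1) (2*j)) +
        Real.sin (dragonAngle α (k+1) (2*j+1)) = 2 * Real.cos α * Real.sin (dragonAngle α k j) := by
      intro j
      rw [(hval j).1, (hval j).2]
      rcases Nat.mod_two_eq_zero_or_one j with h | h <;> rw [h] <;>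
        norm_num [Real.sin_add, Real.cos_neg, Real.sin_neg] <;> ring
    have h2 : (2:ℕ) ^ (k+1) = 2 * 2 ^ k := by ring
    constructor
    · rw [h2, sum_pair]
      simp only [keyc, ← Finset.mul_sum, ih.1]
      ring
    · rw [h2, sum_pair]
      simp only [keys, ← Finset.mul_sum, ih.2]
      ring

theorem stmt7 (α : ℝ) (hα0 : 0 < α) (hα1 : α < π / 3) :
    ∀ k : ℕ,
      xfun α k 0 = 0 ∧ yfun α k 0 = 0 ∧ yfun α k 1 = 0 ∧ xfun α k 1 = 1 ∧
      (∑ i ∈ Finset.range (2 ^ k), Real.cos (dragonAngle α k i) / (2 * Real.cos α) ^ k) = 1 ∧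
      (∑ i ∈ Finset.range (2 ^ k), Real.sin (dragonAngle α k i) / (2 * Real.cos α) ^ k) = 0 := by
  have hπ := Real.pi_pos
  have hcos : 0 < Real.cos α := by
    apply Real.cos_pos_of_mem_Ioo
    constructor <;> [linarith; linarith]
  intro k
  have hpow : ((2 * Real.cos α) ^ k : ℝ) ≠ 0 := by positivity
  have hc : (∑ i ∈ Finset.range (2 ^ k), Real.cos (dragonAngle α k i) / (2 * Real.cos α) ^ k) = 1 := by
    rw [← Finset.sum_div, (sum_trig α k).1, div_self hpow]
  have hs : (∑ i ∈ Finset.range (2 ^ k), Real.sin (dragonAngle α k i) / (2 * Real.cos α) ^ k) = 0 := by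
    rw [← Finset.sum_div, (sum_trig α k).2, zero_div]
  have hfloor : ⌊(1:ℝ) * 2 ^ k⌋₊ = 2 ^ k := by
    rw [one_mul]
    exact_mod_cast Nat.floor_natCast (2 ^ k)
  have hmin : min ⌊(1:ℝ) * 2 ^ k⌋₊ (2 ^ k - 1) = 2 ^ k - 1 := by
    rw [hfloor]; omega
  have hk1 : (1:ℕ) ≤ 2 ^ k := Nat.one_le_two_pow
  have hcast : ((2 ^ k - 1 : ℕ) : ℝ) = 2 ^ k - 1 := by
    push_cast [hk1]; ring
  have h2k : ((2:ℝ)) ^ k ≠ 0 := by positivity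
  have hone : ∀ g : ℕ → ℝ,
      (∑ i ∈ Finset.range (min ⌊(1:ℝ) * 2 ^ k⌋₊ (2 ^ k - 1)), g i) +
        2 ^ k * g (min ⌊(1:ℝ) * 2 ^ k⌋₊ (2 ^ k - 1)) *
          ((1:ℝ) - (min ⌊(1:ℝ) * 2 ^ k⌋₊ (2 ^ k - 1) : ℕ) / 2 ^ k) =
      ∑ i ∈ Finset.range (2 ^ k), g i := by
    intro g
    rw [hmin, hcast]
    have : (2:ℝ) ^ k * g (2 ^ k - 1) * (1 - (2 ^ k - 1) / 2 ^ k) = g (2 ^ k - 1) := by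
      field_simp
      ring
    rw [this, ← Finset.sum_range_succ, Nat.sub_add_cancel hk1]
  refine ⟨?_, ?_, ?_, ?_, hc, hs⟩
  · simp [xfun]
  · simp [yfun]
  · rw [yfun, hone (gcoef α k)]
    simpa [gcoef] using hs
  · rw [xfun, hone (fcoef α k)]
    simpa [fcoef] using hc
end

section
/- Let α = (p/q)·2π be rational in lowest terms with 0 < p/q < 1/6 and k = 2l even. Among the 2^k segments of the k-th dragon curve step (whose angles are kα − 2iα with multiplicity binomial(k,i)), the total number of segments whose angle has zero cosine (i.e. is ≡ ±π/2 mod 2π) is at most 2^{k−1}. -/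
open Real
open scoped Classical

lemma choose_sum_le_aux (n : ℕ) (A : Finset ℕ) :
    ∑ i ∈ A, n.choose i ≤ 2 ^ n := by
  have h1 : ∑ i ∈ A, n.choose i = ∑ i ∈ A ∩ Finset.range (n + 1), n.choose i := by
    refine (Finset.sum_subset Finset.inter_subset_left ?_).symm
    intro i hi hni
    have : ¬ i < n + 1 := fun h => hni (Finset.mem_inter.2 ⟨hi, Finset.mem_range.2 h⟩)
    exact Nat.choose_eq_zero_of_lt (by omega)
  rw [h1]
  calc ∑ i ∈ A ∩ Finset.range (n + 1), n.choose i
      ≤ ∑ i ∈ Finset.range (n + 1), n.choose i :=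
        Finset.sum_le_sum_of_subset Finset.inter_subset_right
    _ = 2 ^ n := Nat.sum_range_choose n

lemma indep_sum_le (k : ℕ) (S : Finset ℕ)
    (hind : ∀ i ∈ S, i + 1 ∉ S) :
    ∑ i ∈ S, k.choose i ≤ 2 ^ (k - 1) := by
  cases k with
  | zero => simpa using choose_sum_le_aux 0 S
  | succ n =>
    have hsplit : ∑ i ∈ S, (n + 1).choose i
        = ∑ i ∈ S, n.choose i + ∑ i ∈ S, (if i = 0 then 0 else n.choose (i - 1)) := by
      rw [← Finset.sum_add_distrib]
      refine Finset.sum_congr rfl ?_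
      intro i _
      cases i with
      | zero => simp
      | succ j => simp [Nat.choose_succ_succ, Nat.add_comm]
    have herase : ∑ i ∈ S, (if i = 0 then 0 else n.choose (i - 1))
        = ∑ i ∈ S.erase 0, n.choose (i - 1) := by
      have h1 : ∑ i ∈ S, (if i = 0 then 0 else n.choose (i - 1))
          = ∑ i ∈ S.erase 0, (if i = 0 then 0 else n.choose (i - 1)) := by
        refine (Finset.sum_subset (Finset.erase_subset 0 S) ?_).symm
        intro i hi hni
        have : i = 0 := by
          by_contra h
          exact hni (Finset.mem_erase.2 ⟨h, hi⟩)
        simp [this]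
      rw [h1]
      exact Finset.sum_congr rfl (fun i hi => by simp [Finset.ne_of_mem_erase hi])
    have himg : ∑ i ∈ S.erase 0, n.choose (i - 1)
        = ∑ j ∈ (S.erase 0).image (· - 1), n.choose j := by
      rw [Finset.sum_image]
      intro a ha b hb hab
      have ha0 : a ≠ 0 := Finset.ne_of_mem_erase ha
      have hb0 : b ≠ 0 := Finset.ne_of_mem_erase hb
      have hab' : a - 1 = b - 1 := hab
      omega
    have hdisj : Disjoint S ((S.erase 0).image (· - 1)) := by
      rw [Finset.disjoint_left]
      intro j hj hj'
      obtain ⟨i, hi, hij⟩ := Finset.mem_image.1 hj'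
      have hi0 : i ≠ 0 := Finset.ne_of_mem_erase hi
      have : i = j + 1 := by omega
      exact hind j hj (this ▸ Finset.mem_of_mem_erase hi)
    calc ∑ i ∈ S, (n + 1).choose i
        = ∑ i ∈ S ∪ (S.erase 0).image (· - 1), n.choose i := by
          rw [hsplit, herase, himg, Finset.sum_union hdisj]
      _ ≤ 2 ^ n := choose_sum_le_aux n _
      _ = 2 ^ (n + 1 - 1) := by norm_num

theorem stmt15 (p q : ℕ) (hpq : Nat.Coprime p q) (hp : 0 < p) (hq : 6 * p < q)
    (α : ℝ) (hα : α = (p : ℝ) / (q : ℝ) * (2 * π))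
    (k l : ℕ) (hk : k = 2 * l) :
    ∑ i ∈ (Finset.range (k + 1)).filter
        (fun i : ℕ => Real.cos ((k : ℝ) * α - 2 * (i : ℝ) * α) = 0),
      k.choose i ≤ 2 ^ (k - 1) := by
  apply indep_sum_le
  intro i hi hi1
  simp only [Finset.mem_filter, Finset.mem_range] at hi hi1
  obtain ⟨_, hci⟩ := hi
  obtain ⟨_, hci1⟩ := hi1
  obtain ⟨m, hm⟩ := Real.cos_eq_zero_iff.1 hci
  obtain ⟨n, hn⟩ := Real.cos_eq_zero_iff.1 hci1
  have hqpos : (0:ℝ) < q := by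
    have h0 : 0 < q := by omega
    exact_mod_cast h0
  have hp' : (0:ℝ) < p := by exact_mod_cast hp
  have hαpos : 0 < α := by
    rw [hα]
    exact mul_pos (div_pos hp' hqpos) (by linarith [Real.pi_pos])
  have hαlt : 2 * α < π := by
    rw [hα]
    have hlt : (p:ℝ) / q < 1 / 6 := by
      rw [div_lt_div_iff₀ hqpos (by norm_num)]
      have : (6:ℝ) * p < q := by exact_mod_cast hq
      linarith
    have hπ := Real.pi_pos
    calc 2 * ((p:ℝ) / q * (2 * π)) < 2 * (1 / 6 * (2 * π)) := by
          apply mul_lt_mul_of_pos_left _ (by norm_num)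
          apply mul_lt_mul_of_pos_right hlt (by positivity)
      _ < π := by linarith
  have key : 2 * α = (↑m - ↑n) * π := by
    have : ((k:ℝ) * α - 2 * (i:ℝ) * α) - ((k:ℝ) * α - 2 * (↑(i+1):ℝ) * α)
        = (2 * m + 1) * π / 2 - (2 * n + 1) * π / 2 := by rw [← hm, ← hn]
    push_cast at this
    ring_nf at this ⊢
    linarith
  have h0 : (0:ℝ) < (↑m - ↑n : ℝ) * π := by linarith
  have h1 : ((m:ℝ) - n) * π < π := by linarith
  have hπ := Real.pi_pos
  have hmn0 : (0:ℝ) < (m:ℝ) - n := by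
    by_contra h
    push_neg at h
    nlinarith
  have hmn1 : ((m:ℝ) - n) < 1 := by
    by_contra h
    push_neg at h
    nlinarith
  have : (0:ℤ) < m - n ∧ (m - n : ℤ) < 1 := by
    constructor <;> [exact_mod_cast (by push_cast; linarith : ((0:ℤ):ℝ) < ((m - n : ℤ):ℝ));
      exact_mod_cast (by push_cast; linarith : ((m - n : ℤ):ℝ) < ((1:ℤ):ℝ))]
  omega
end
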